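/- Let F be a presheaf of sets on the category of β-sets. For every set S, the natural map F(βS) → eq( F(B(βS)) ⇉ F(B²(βS)) ) is a bijection; i.e., the extension functor composed with restriction is isomorphic to the identity on presheaves on β-sets. -/

import Mathlib

open CategoryTheory Limits Opposite

universe u

attribute [local instance] ConcreteCategory.instFunLike

/-- The category of β-sets: the full subcategory of compact Hausdorff spaces consisting of
Stone–Čech compactifications of discrete spaces. -/
abbrev BSetProp : CompHaus.{u} → Prop := fun X => ∃ S : Type u, Nonempty (X ≃ₜ Ultrafilter S)

abbrev BSet := ObjectProperty.FullSubcategory BSetProp.{u}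

/-- The β-set `βS` of a set `S`. -/
def bset (S : Type u) : BSet.{u} := ⟨CompHaus.of (Ultrafilter S), S, ⟨Homeomorph.refl _⟩⟩

/-- `B(X) = β|X|` as a β-set. -/
noncomputable def bObj (X : CompHaus.{u}) : BSet.{u} :=
  ⟨CompHaus.of (Ultrafilter X), X, ⟨Homeomorph.refl _⟩⟩

/-- The canonical surjection `ξ_X : B(X) → X`. -/
noncomputable def xi (X : CompHaus.{u}) : (bObj X).obj ⟶ X :=
  CompHausLike.ofHom _ ⟨Ultrafilter.extend id, continuous_ultrafilter_extend _⟩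

/-- The fiber product `B(X) ×_X B(X)` along `ξ_X`. -/
def W (X : CompHaus.{u}) : Type u :=
  { p : Ultrafilter X × Ultrafilter X // xi X p.1 = xi X p.2 }

/-- `B²(X) = B(B(X) ×_X B(X))` as a β-set. -/
noncomputable def b2Obj (X : CompHaus.{u}) : BSet.{u} :=
  ⟨CompHaus.of (Ultrafilter (W X)), W X, ⟨Homeomorph.refl _⟩⟩

/-- `π₁ = p₁ ∘ ξ : B²(X) → B(X)`. -/
noncomputable def pi1 (X : CompHaus.{u}) : b2Obj X ⟶ bObj X :=
  ObjectProperty.homMk (CompHausLike.ofHom _ ⟨Ultrafilter.extend (fun w : W X => w.1.1), continuous_ultrafilter_extend _⟩)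

/-- `π₂ = p₂ ∘ ξ : B²(X) → B(X)`. -/
noncomputable def pi2 (X : CompHaus.{u}) : b2Obj X ⟶ bObj X :=
  ObjectProperty.homMk (CompHausLike.ofHom _ ⟨Ultrafilter.extend (fun w : W X => w.1.2), continuous_ultrafilter_extend _⟩)

/-- For a set `S`, the canonical map `ξ_{βS} : B(βS) → βS`, viewed as a morphism of
β-sets. -/
noncomputable def xiBset (S : Type u) : bObj ((bset S).obj) ⟶ bset S :=
  ObjectProperty.homMk (CompHausLike.ofHom _ ⟨Ultrafilter.extend id, continuous_ultrafilter_extend _⟩)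



lemma extend_pure' {α : Type u} {γ : Type u} [TopologicalSpace γ] [T2Space γ]
    (f : α → γ) (a : α) : Ultrafilter.extend f (pure a) = f a :=
  congrFun (ultrafilter_extend_extends f) a

/-- The underlying function of the canonical section `σ : βS → B(βS)`. -/
noncomputable def sigFun (S : Type u) : Ultrafilter S → Ultrafilter (Ultrafilter S) :=
  Ultrafilter.extend (fun s : S => (pure (pure s : Ultrafilter S)))

lemma xi_sig_fun (S : Type u) (x : Ultrafilter S) :
    Ultrafilter.extend (id : Ultrafilter S → Ultrafilter S) (sigFun S x) = x := by
  have h : (Ultrafilter.extend (id : Ultrafilter S → Ultrafilter S)) ∘ sigFun S = id := by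
    apply Continuous.ext_on denseRange_pure
    · exact (continuous_ultrafilter_extend _).comp (continuous_ultrafilter_extend _)
    · exact continuous_id
    · rintro _ ⟨s, rfl⟩
      simp only [Function.comp_apply, sigFun, extend_pure', id_eq]
  exact congrFun h x

/-- The canonical section `σ : βS → B(βS)` of `ξ_{βS}`, as a morphism of β-sets. -/
noncomputable def sigmaBset (S : Type u) : bset S ⟶ bObj ((bset S).obj) :=
  ObjectProperty.homMk (CompHausLike.ofHom _ ⟨sigFun S, continuous_ultrafilter_extend _⟩)

lemma sigma_xi (S : Type u) : sigmaBset S ≫ xiBset S = 𝟙 (bset S) := by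
  apply ObjectProperty.hom_ext
  apply ConcreteCategory.hom_ext
  intro x
  exact xi_sig_fun S x

/-- The underlying function of `t : B(βS) → B²(βS)`. -/
noncomputable def tFun (S : Type u) :
    Ultrafilter (Ultrafilter S) → Ultrafilter (W ((bset S).obj)) :=
  Ultrafilter.extend (fun x : Ultrafilter S =>
    (pure (⟨(sigFun S x, pure x), by
      show Ultrafilter.extend id (sigFun S x) = Ultrafilter.extend id (pure x)
      rw [extend_pure']
      exact xi_sig_fun S x⟩ : W ((bset S).obj))))

/-- The splitting map `t : B(βS) → B²(βS)`. -/
noncomputable def tMap (S : Type u) : bObj ((bset S).obj) ⟶ b2Obj ((bset S).obj) :=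
  ObjectProperty.homMk (CompHausLike.ofHom _ ⟨tFun S, continuous_ultrafilter_extend _⟩)

lemma t_pi1 (S : Type u) : tMap S ≫ pi1 ((bset S).obj) = xiBset S ≫ sigmaBset S := by
  apply ObjectProperty.hom_ext
  apply ConcreteCategory.hom_ext
  have h : (Ultrafilter.extend (fun w : W ((bset S).obj) => w.1.1)) ∘ tFun S =
      sigFun S ∘ (Ultrafilter.extend (id : Ultrafilter S → Ultrafilter S)) := by
    apply Continuous.ext_on denseRange_pure
    · exact (continuous_ultrafilter_extend _).comp (continuous_ultrafilter_extend _)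
    · exact (continuous_ultrafilter_extend _).comp (continuous_ultrafilter_extend _)
    · rintro _ ⟨x, rfl⟩
      simp only [Function.comp_apply, tFun, extend_pure', id_eq]
      exact extend_pure' _ _
  intro b
  exact congrFun h b

lemma t_pi2 (S : Type u) : tMap S ≫ pi2 ((bset S).obj) = 𝟙 (bObj ((bset S).obj)) := by
  apply ObjectProperty.hom_ext
  apply ConcreteCategory.hom_ext
  have h : (Ultrafilter.extend (fun w : W ((bset S).obj) => w.1.2)) ∘ tFun S = id := by
    apply Continuous.ext_on denseRange_pure
    · exact (continuous_ultrafilter_extend _).comp (continuous_ultrafilter_extend _)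
    · exact continuous_id
    · rintro _ ⟨x, rfl⟩
      simp only [Function.comp_apply, tFun, extend_pure', id_eq]
      exact extend_pure' _ _
  intro b
  exact congrFun h b

lemma pi_xi (S : Type u) :
    pi1 ((bset S).obj) ≫ xiBset S = pi2 ((bset S).obj) ≫ xiBset S := by
  apply ObjectProperty.hom_ext
  apply ConcreteCategory.hom_ext
  have h : (Ultrafilter.extend (id : Ultrafilter S → Ultrafilter S)) ∘
        (Ultrafilter.extend (fun w : W ((bset S).obj) => w.1.1)) =
      (Ultrafilter.extend (id : Ultrafilter S → Ultrafilter S)) ∘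
        (Ultrafilter.extend (fun w : W ((bset S).obj) => w.1.2)) := by
    apply Continuous.ext_on denseRange_pure
    · exact (continuous_ultrafilter_extend _).comp (continuous_ultrafilter_extend _)
    · exact (continuous_ultrafilter_extend _).comp (continuous_ultrafilter_extend _)
    · rintro _ ⟨w, rfl⟩
      simp only [Function.comp_apply, extend_pure']
      exact (congrArg (Ultrafilter.extend (id : Ultrafilter S → Ultrafilter S)) (extend_pure' (fun w : W ((bset S).obj) => w.1.1) w)).trans (w.2.trans (congrArg (Ultrafilter.extend (id : Ultrafilter S → Ultrafilter S)) (extend_pure' (fun w : W ((bset S).obj) => w.1.2) w)).symm)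
  intro b
  exact congrFun h b

/-- For any presheaf `F` on β-sets and any set `S`, the natural map
`F(βS) → eq( F(B(βS)) ⇉ F(B²(βS)) )` induced by `ξ_{βS}` is a bijection; i.e. the
extension functor composed with restriction is isomorphic to the identity. -/
theorem stmt17 (F : BSet.{u}ᵒᵖ ⥤ Type u) (S : Type u) :
    Function.Injective (F.map (xiBset S).op) ∧
    ∀ y : F.obj (op (bObj ((bset S).obj))),
      (F.map (pi1 ((bset S).obj)).op y = F.map (pi2 ((bset S).obj)).op y
        ↔ ∃ x, F.map (xiBset S).op x = y) := by
  have key : ∀ x, F.map (sigmaBset S).op (F.map (xiBset S).op x) = x := by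
    intro x
    rw [← FunctorToTypes.map_comp_apply, ← op_comp, sigma_xi S, op_id, FunctorToTypes.map_id_apply]
  constructor
  · intro a b h
    have := congrArg (F.map (sigmaBset S).op) h
    rwa [key, key] at this
  · intro y
    constructor
    · intro h
      refine ⟨F.map (sigmaBset S).op y, ?_⟩
      have h1 : F.map (tMap S).op (F.map (pi1 ((bset S).obj)).op y) =
          F.map (tMap S).op (F.map (pi2 ((bset S).obj)).op y) := by rw [h]
      rw [← FunctorToTypes.map_comp_apply, ← FunctorToTypes.map_comp_apply,
        ← op_comp, ← op_comp, t_pi1, t_pi2, op_id, FunctorToTypes.map_id_apply,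
        op_comp, FunctorToTypes.map_comp_apply] at h1
      exact h1
    · rintro ⟨x, rfl⟩
      rw [← FunctorToTypes.map_comp_apply, ← FunctorToTypes.map_comp_apply,
        ← op_comp, ← op_comp, pi_xi]
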